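/- Let g be a polynomial in three variables with nonnegative integer coefficients which is not identically equal to the constant polynomial 1. Then there exist no positive integers a, b, c with gcd(a, b, c) = 3 satisfying a² + b² + c² = abc · g(a, b, c). -/

import Mathlib

/-- Vieta jump: given a sorted positive solution with t ≥ 2, produce a smaller one. -/
lemma markov_jump (x y z t : ℤ) (hx : 0 < x) (hy : 0 < y) (hz : 0 < z) (ht : 2 ≤ t)
    (hxy : x ≤ y) (hyz : y ≤ z) (heq : x ^ 2 + y ^ 2 + z ^ 2 = 3 * (x * y * z) * t) :
    ∃ z', 0 < z' ∧ z' < z ∧ x ^ 2 + y ^ 2 + z' ^ 2 = 3 * (x * y * z') * t := by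
  refine ⟨3 * x * y * t - z, ?_, ?_, by linear_combination heq⟩
  · nlinarith [heq, mul_pos hx hy, sq_nonneg x, sq_nonneg y]
  · by_contra h
    push_neg at h
    have h1 : z * z ≤ z * (3 * x * y * t - z) := by
      exact mul_le_mul_of_nonneg_left h hz.le
    have h2 : z ^ 2 ≤ x ^ 2 + y ^ 2 := by nlinarith [heq, h1]
    have h3 : 3 * (x * y * z) * t ≤ 4 * (y * z) := by
      nlinarith [h2, sq_nonneg (x - y), mul_le_mul_of_nonneg_left hyz hy.le]
    have h4 : (6 : ℤ) ≤ 3 * x * t := by nlinarith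
    nlinarith [mul_le_mul_of_nonneg_right h4 (mul_pos hy hz).le, h3]

/-- No positive solutions of x²+y²+z² = 3xyz·t with t ≥ 2. -/
lemma markov_descent : ∀ n : ℕ, ∀ x y z t : ℤ, x + y + z ≤ (n : ℤ) → 0 < x → 0 < y →
    0 < z → 2 ≤ t → x ^ 2 + y ^ 2 + z ^ 2 ≠ 3 * (x * y * z) * t := by
  intro n
  induction n using Nat.strong_induction_on with
  | _ n ih =>
    intro x y z t hsum hx hy hz ht heq
    obtain ⟨p, q, r, hp, hq, hr, hpq, hqr, heq', hsum'⟩ :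
        ∃ p q r : ℤ, 0 < p ∧ 0 < q ∧ 0 < r ∧ p ≤ q ∧ q ≤ r ∧
          p ^ 2 + q ^ 2 + r ^ 2 = 3 * (p * q * r) * t ∧ p + q + r = x + y + z := by
      rcases le_total x y with h1 | h1 <;> rcases le_total y z with h2 | h2 <;>
        rcases le_total x z with h3 | h3
      all_goals first
        | exact ⟨x, y, z, hx, hy, hz, by linarith, by linarith, by linear_combination heq, by ring⟩
        | exact ⟨x, z, y, hx, hz, hy, by linarith, by linarith, by linear_combination heq, by ring⟩
        | exact ⟨y, x, z, hy, hx, hz, by linarith, by linarith, by linear_combination heq, by ring⟩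
        | exact ⟨y, z, x, hy, hz, hx, by linarith, by linarith, by linear_combination heq, by ring⟩
        | exact ⟨z, x, y, hz, hx, hy, by linarith, by linarith, by linear_combination heq, by ring⟩
        | exact ⟨z, y, x, hz, hy, hx, by linarith, by linarith, by linear_combination heq, by ring⟩
    obtain ⟨z', hz', hz'r, heq''⟩ := markov_jump p q r t hp hq hr ht hpq hqr heq'
    have hn : 1 ≤ n := by
      by_contra h
      push_neg at h
      interval_cases n <;> simp_all <;> linarith
    have hsum'' : p + q + z' ≤ ((n - 1 : ℕ) : ℤ) := by
      have : ((n - 1 : ℕ) : ℤ) = (n : ℤ) - 1 := by omega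
      rw [this]
      linarith
    exact ih (n - 1) (by omega) p q z' t hsum'' hp hq hz' ht heq''

lemma eval_nonneg_of_coeff_nonneg (g : MvPolynomial (Fin 3) ℤ)
    (h : ∀ m, 0 ≤ MvPolynomial.coeff m g) (v : Fin 3 → ℤ) (hv : ∀ i, 0 ≤ v i) :
    0 ≤ MvPolynomial.eval v g := by
  rw [MvPolynomial.eval_eq']
  refine Finset.sum_nonneg fun m _ => mul_nonneg (h m) ?_
  exact Finset.prod_nonneg fun i _ => pow_nonneg (hv i) _

lemma eval_one_forces (g : MvPolynomial (Fin 3) ℤ)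
    (h : ∀ m, 0 ≤ MvPolynomial.coeff m g) (v : Fin 3 → ℤ) (hv : ∀ i, 3 ≤ v i)
    (hev : MvPolynomial.eval v g = 1) : g = 1 := by
  rw [MvPolynomial.eval_eq'] at hev
  have hterm : ∀ m ∈ g.support, 0 ≤ MvPolynomial.coeff m g * ∏ i, v i ^ m i := by
    intro m _
    exact mul_nonneg (h m) (Finset.prod_nonneg fun i _ => pow_nonneg (by linarith [hv i]) _)
  have hsupp : ∀ m ∈ g.support, m = 0 := by
    intro m hm
    by_contra hm0
    obtain ⟨i, hi⟩ : ∃ i, m i ≠ 0 := by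
      by_contra hcon
      push_neg at hcon
      exact hm0 (Finsupp.ext hcon)
    have hc1 : 1 ≤ MvPolynomial.coeff m g :=
      lt_of_le_of_ne (h m) (Ne.symm (MvPolynomial.mem_support_iff.mp hm))
    have hprod : 3 ≤ ∏ j, v j ^ m j := by
      have h1 : (∏ j, (if j = i then v i ^ m i else 1)) ≤ ∏ j, v j ^ m j := by
        refine Finset.prod_le_prod (fun j _ => ?_) (fun j _ => ?_)
        · split
          · exact pow_nonneg (by linarith [hv i]) _
          · norm_num
        · by_cases hj : j = i
          · subst hj; simp
          · rw [if_neg hj]; exact one_le_pow₀ (by linarith [hv j])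
      have h1' : (∏ j, (if j = i then v i ^ m i else 1)) = v i ^ m i := by
        simp [Finset.prod_ite_eq']
      have h2 : (3 : ℤ) ≤ v i ^ m i :=
        le_trans (hv i) (le_self_pow₀ (by linarith [hv i]) hi)
      rw [h1'] at h1
      linarith
    have hle : MvPolynomial.coeff m g * ∏ j, v j ^ m j ≤ 1 := by
      rw [← hev]
      exact Finset.single_le_sum hterm hm
    nlinarith
  have hg : g = MvPolynomial.C (MvPolynomial.coeff 0 g) := by
    apply MvPolynomial.ext
    intro m
    rw [MvPolynomial.coeff_C]
    by_cases hm : m = 0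
    · simp [hm]
    · rw [if_neg (fun h' => hm h'.symm)]
      by_contra hne
      exact hm (hsupp m (MvPolynomial.mem_support_iff.mpr hne))
  have hc : MvPolynomial.coeff 0 g = 1 := by
    have h2 : MvPolynomial.eval v g = MvPolynomial.coeff 0 g := by
      nth_rewrite 1 [hg]
      exact MvPolynomial.eval_C _
    rw [MvPolynomial.eval_eq'] at h2
    exact h2.symm.trans hev
  rw [hg, hc, map_one]

theorem no_solution_gcd_three (g : MvPolynomial (Fin 3) ℤ)
    (hg_nonneg : ∀ m, 0 ≤ MvPolynomial.coeff m g) (hg_ne : g ≠ 1) :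
    ¬ ∃ a b c : ℤ, 0 < a ∧ 0 < b ∧ 0 < c ∧ Int.gcd a (Int.gcd b c) = 3 ∧
      a ^ 2 + b ^ 2 + c ^ 2 = a * b * c * MvPolynomial.eval ![a, b, c] g := by
  rintro ⟨a, b, c, ha, hb, hc, hgcd, heq⟩
  have h3a : (3 : ℤ) ∣ a := by
    have := Int.gcd_dvd_left (a := a) (b := (Int.gcd b c : ℤ))
    rwa [hgcd] at this
  have h3g : (3 : ℤ) ∣ (Int.gcd b c : ℤ) := by
    have := Int.gcd_dvd_right (a := a) (b := (Int.gcd b c : ℤ))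
    rwa [hgcd] at this
  have h3b : (3 : ℤ) ∣ b := dvd_trans h3g (Int.gcd_dvd_left b c)
  have h3c : (3 : ℤ) ∣ c := dvd_trans h3g (Int.gcd_dvd_right b c)
  obtain ⟨x, rfl⟩ := h3a
  obtain ⟨y, rfl⟩ := h3b
  obtain ⟨z, rfl⟩ := h3c
  have hx : 0 < x := by linarith
  have hy : 0 < y := by linarith
  have hz : 0 < z := by linarith
  set t : ℤ := MvPolynomial.eval ![3 * x, 3 * y, 3 * z] g with ht
  have ht0 : 0 ≤ t := by
    apply eval_nonneg_of_coeff_nonneg g hg_nonneg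
    intro i
    fin_cases i <;> simp <;> linarith
  have heq' : x ^ 2 + y ^ 2 + z ^ 2 = 3 * (x * y * z) * t := by
    have h9 : (9 : ℤ) * (x ^ 2 + y ^ 2 + z ^ 2) = 9 * (3 * (x * y * z) * t) := by
      linear_combination heq
    exact mul_left_cancel₀ (by norm_num) h9
  rcases lt_trichotomy t 1 with h | h | h
  · have : t = 0 := by omega
    rw [this] at heq'
    nlinarith [sq_nonneg x, sq_nonneg y, sq_nonneg z]
  · exact hg_ne (eval_one_forces g hg_nonneg ![3 * x, 3 * y, 3 * z]
      (by intro i; fin_cases i <;> simp <;> linarith) (ht ▸ h))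
  · have ht2 : 2 ≤ t := by omega
    exact markov_descent (x + y + z).toNat x y z t (Int.self_le_toNat _) hx hy hz ht2 heq'
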